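/- The constant term (in x, y, z) of the Laurent expansion of 1/(1 − μ^{1/4}·(x⁴+y⁴+z⁴+1)/(xyz)), computed as (2πi)^{-3} ∫_{𝕋³} (1 − μ^{1/4}(x⁴+y⁴+z⁴+1)/(xyz))^{-1} dx/x · dy/y · dz/z for |μ| sufficiently small, equals ₃F₂(1/4, 1/2, 3/4; 1, 1; 256μ). Equivalently, for each n ≥ 0 the constant term of ((x⁴+y⁴+z⁴+1)/(xyz))^{4n} contributes the coefficient (4n)!/(n!)⁴ = multinomial count, and the coefficient of μⁿ in the period is (1/4)ₙ(1/2)ₙ(3/4)ₙ/(n!)³·256ⁿ. -/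

import Mathlib

open scoped Real

/-- The generalized hypergeometric series `₃F₂(1/4, 1/2, 3/4; 1, 1; x)`
`= Σ_{n≥0} (1/4)ₙ(1/2)ₙ(3/4)ₙ/(n!)³·xⁿ` over `ℂ`. -/
noncomputable def F32quartic (x : ℂ) : ℂ :=
  ∑' n : ℕ, ((ascPochhammer ℂ n).eval (1 / 4) * (ascPochhammer ℂ n).eval (1 / 2)
      * (ascPochhammer ℂ n).eval (3 / 4)) / ((Nat.factorial n : ℂ)) ^ 3 * x ^ n

open intervalIntegral

namespace QPaux

noncomputable def ee (θ : ℝ) : ℂ := Complex.exp (Complex.I * θ)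
lemma ee_ne (θ : ℝ) : ee θ ≠ 0 := Complex.exp_ne_zero _
lemma abs_ee (θ : ℝ) : ‖ee θ‖ = 1 := by simp [ee, Complex.norm_exp]
@[fun_prop] lemma cont_ee : Continuous ee := by unfold ee; fun_prop
lemma ee_zpow (j : ℤ) (θ : ℝ) : ee θ ^ j = Complex.exp (((j : ℂ) * Complex.I) * θ) := by
  rw [ee, ← Complex.exp_int_mul]; ring_nf
lemma cont_ee_zpow (j : ℤ) : Continuous fun θ : ℝ => ee θ ^ j := by
  simp only [ee_zpow]; fun_prop
lemma integral_ee_zpow (j : ℤ) :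
    (∫ θ in (0:ℝ)..(2*π), ee θ ^ j) = if j = 0 then (2*π : ℂ) else 0 := by
  simp only [ee_zpow]
  rcases eq_or_ne j 0 with h | h
  · simp [h]
  · have hc : (j : ℂ) * Complex.I ≠ 0 := by
      simp [Complex.I_ne_zero, Complex.ext_iff, h]
    rw [integral_exp_mul_complex hc]
    have h1 : (j : ℂ) * Complex.I * ((2*π : ℝ) : ℂ) = (j : ℤ) * (2 * (π:ℂ) * Complex.I) := by
      push_cast; ring
    have h2 : (j : ℂ) * Complex.I * ((0 : ℝ) : ℂ) = 0 := by simp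
    rw [h1, h2, Complex.exp_int_mul_two_pi_mul_I, Complex.exp_zero]
    simp [h]

lemma keyGen (N : ℕ) (M : ℤ) (w : ℂ) :
    (∫ θ in (0:ℝ)..(2*π), (w + ee θ ^ 4) ^ N * ee θ ^ (-M))
    = ∑ c ∈ Finset.range (N+1),
        (Nat.choose N c : ℂ) * w ^ (N - c) * (if (4 * (c:ℤ)) = M then (2*π : ℂ) else 0) := by
  have expand : ∀ θ : ℝ, (w + ee θ ^ 4) ^ N * ee θ ^ (-M)
      = ∑ c ∈ Finset.range (N+1),
          ((Nat.choose N c : ℂ) * w ^ (N - c)) * ee θ ^ ((4 * (c:ℤ)) - M) := by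
    intro θ
    rw [add_comm w, add_pow, Finset.sum_mul]
    refine Finset.sum_congr rfl fun c hc => ?_
    have h1 : (ee θ ^ 4) ^ c = ee θ ^ ((4 * (c:ℤ))) := by
      rw [← pow_mul, show (4 * (c:ℤ)) = ((4*c : ℕ) : ℤ) by push_cast; ring, zpow_natCast]
    rw [h1, show (4 * (c:ℤ)) - M = (4 * (c:ℤ)) + (-M) from sub_eq_add_neg _ _,
      zpow_add₀ (ee_ne θ)]
    ring
  rw [intervalIntegral.integral_congr (fun θ _ => expand θ)]
  rw [intervalIntegral.integral_finset_sum
    (f := fun c θ => ((Nat.choose N c : ℂ) * w ^ (N - c)) * ee θ ^ ((4 * (c:ℤ)) - M))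
    (fun c _ => ((continuous_const.mul (cont_ee_zpow _)).intervalIntegrable _ _))]
  refine Finset.sum_congr rfl fun c hc => ?_
  rw [intervalIntegral.integral_const_mul, integral_ee_zpow]
  simp only [sub_eq_zero, mul_assoc]

lemma key0 (N : ℕ) (M : ℤ) (hM : ∀ c : ℕ, (4 * (c:ℤ)) ≠ M) (w : ℂ) :
    (∫ θ in (0:ℝ)..(2*π), (w + ee θ ^ 4) ^ N * ee θ ^ (-M)) = 0 := by
  rw [keyGen]
  refine Finset.sum_eq_zero fun c _ => ?_
  simp [hM c]

lemma key (N n : ℕ) (hn : n ≤ N) (w : ℂ) :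
    (∫ θ in (0:ℝ)..(2*π), (w + ee θ ^ 4) ^ N * ee θ ^ (-(4 * (n:ℤ))))
    = (2*π : ℂ) * (Nat.choose N n : ℂ) * w ^ (N - n) := by
  rw [keyGen]
  rw [Finset.sum_eq_single n]
  · simp; ring
  · intro c hc hcn
    have : ¬ (4 * (c:ℤ) = 4 * (n:ℤ)) := by omega
    simp [this]
  · intro hnn
    exact absurd (Finset.mem_range.mpr (by omega)) hnn
noncomputable def Sf (θ₁ θ₂ θ₃ : ℝ) : ℂ :=
  (ee θ₁ ^ 4 + ee θ₂ ^ 4 + ee θ₃ ^ 4 + 1) / (ee θ₁ * ee θ₂ * ee θ₃)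

lemma cont_Sf : Continuous (fun p : ℝ × ℝ × ℝ => Sf p.1 p.2.1 p.2.2) := by
  unfold Sf
  apply Continuous.div
  · fun_prop (disch := skip)
  · fun_prop (disch := skip)
  · exact fun p => mul_ne_zero (mul_ne_zero (ee_ne _) (ee_ne _)) (ee_ne _)

lemma norm_Sf_le (θ₁ θ₂ θ₃ : ℝ) : ‖Sf θ₁ θ₂ θ₃‖ ≤ 4 := by
  have habs : ∀ θ : ℝ, ‖ee θ ^ 4‖ = 1 := by
    intro θ; rw [norm_pow, abs_ee]; norm_num
  have hd : ‖ee θ₁ * ee θ₂ * ee θ₃‖ = 1 := by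
    simp [norm_mul, abs_ee]
  rw [Sf, norm_div, hd, div_one]
  calc ‖ee θ₁ ^ 4 + ee θ₂ ^ 4 + ee θ₃ ^ 4 + 1‖
      ≤ ‖ee θ₁ ^ 4 + ee θ₂ ^ 4 + ee θ₃ ^ 4‖ + ‖(1:ℂ)‖ := norm_add_le _ _
    _ ≤ (‖ee θ₁ ^ 4 + ee θ₂ ^ 4‖ + ‖ee θ₃ ^ 4‖) + ‖(1:ℂ)‖ := by
        gcongr; exact norm_add_le _ _
    _ ≤ ((‖ee θ₁ ^ 4‖ + ‖ee θ₂ ^ 4‖) + ‖ee θ₃ ^ 4‖) + ‖(1:ℂ)‖ := by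
        gcongr; exact norm_add_le _ _
    _ = 4 := by rw [habs, habs, habs, norm_one]; norm_num

lemma Sf_pow (m : ℕ) (θ₁ θ₂ θ₃ : ℝ) : Sf θ₁ θ₂ θ₃ ^ m
    = (ee θ₁ ^ (-(m:ℤ)) * ee θ₂ ^ (-(m:ℤ)))
      * (((ee θ₁ ^ 4 + ee θ₂ ^ 4 + 1) + ee θ₃ ^ 4) ^ m * ee θ₃ ^ (-(m:ℤ))) := by
  simp only [zpow_neg, zpow_natCast]
  rw [Sf, div_pow]
  rw [show ee θ₁ ^ 4 + ee θ₂ ^ 4 + ee θ₃ ^ 4 + 1 = (ee θ₁ ^ 4 + ee θ₂ ^ 4 + 1) + ee θ₃ ^ 4 by ring]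
  field_simp
  ring

lemma inner3 (m : ℕ) (θ₁ θ₂ : ℝ) :
    (∫ θ₃ in (0:ℝ)..(2*π), Sf θ₁ θ₂ θ₃ ^ m)
    = (ee θ₁ ^ (-(m:ℤ)) * ee θ₂ ^ (-(m:ℤ)))
      * ∑ c ∈ Finset.range (m+1), (Nat.choose m c : ℂ) * (ee θ₁ ^ 4 + ee θ₂ ^ 4 + 1) ^ (m - c)
          * (if (4 * (c:ℤ)) = (m:ℤ) then (2*π : ℂ) else 0) := by
  have h : ∀ θ₃ : ℝ, Sf θ₁ θ₂ θ₃ ^ m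
      = (ee θ₁ ^ (-(m:ℤ)) * ee θ₂ ^ (-(m:ℤ)))
        * (((ee θ₁ ^ 4 + ee θ₂ ^ 4 + 1) + ee θ₃ ^ 4) ^ m * ee θ₃ ^ (-(m:ℤ))) :=
    fun θ₃ => Sf_pow m θ₁ θ₂ θ₃
  rw [intervalIntegral.integral_congr (fun θ₃ _ => h θ₃), intervalIntegral.integral_const_mul,
    keyGen]

lemma T_not_dvd (m : ℕ) (hm : ¬ (4 ∣ m)) :
    (∫ θ₁ in (0:ℝ)..(2*π), ∫ θ₂ in (0:ℝ)..(2*π), ∫ θ₃ in (0:ℝ)..(2*π), Sf θ₁ θ₂ θ₃ ^ m) = 0 := by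
  have h0 : ∀ θ₁ θ₂ : ℝ, (∫ θ₃ in (0:ℝ)..(2*π), Sf θ₁ θ₂ θ₃ ^ m) = 0 := by
    intro θ₁ θ₂
    rw [inner3]
    rw [Finset.sum_eq_zero (fun c _ => by
      have : ¬ ((4 * (c:ℤ)) = (m:ℤ)) := by omega
      simp [this])]
    simp
  calc (∫ θ₁ in (0:ℝ)..(2*π), ∫ θ₂ in (0:ℝ)..(2*π), ∫ θ₃ in (0:ℝ)..(2*π), Sf θ₁ θ₂ θ₃ ^ m)
      = ∫ θ₁ in (0:ℝ)..(2*π), ∫ θ₂ in (0:ℝ)..(2*π), (0:ℂ) := by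
        apply intervalIntegral.integral_congr
        intro θ₁ _
        apply intervalIntegral.integral_congr
        intro θ₂ _
        exact h0 θ₁ θ₂
    _ = 0 := by simp

lemma T_eval (n : ℕ) :
    (∫ θ₁ in (0:ℝ)..(2*π), ∫ θ₂ in (0:ℝ)..(2*π), ∫ θ₃ in (0:ℝ)..(2*π), Sf θ₁ θ₂ θ₃ ^ (4*n))
    = (2*π : ℂ)^3 * ((Nat.choose (4*n) n * Nat.choose (3*n) n * Nat.choose (2*n) n : ℕ) : ℂ) := by
  have h3 : ∀ θ₁ θ₂ : ℝ, (∫ θ₃ in (0:ℝ)..(2*π), Sf θ₁ θ₂ θ₃ ^ (4*n))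
      = ((2*π : ℂ) * (Nat.choose (4*n) n : ℂ) * ee θ₁ ^ (-(4*(n:ℤ))))
        * (((ee θ₁ ^ 4 + 1) + ee θ₂ ^ 4) ^ (3*n) * ee θ₂ ^ (-(4*(n:ℤ)))) := by
    intro θ₁ θ₂
    rw [inner3]
    rw [Finset.sum_eq_single n]
    · have hcond : (4 * (n:ℤ)) = ((4*n : ℕ) : ℤ) := by push_cast; ring
      rw [if_pos hcond, show 4*n - n = 3*n by omega,
        show ((-(4*n:ℕ) : ℤ)) = -(4*(n:ℤ)) by push_cast; ring,
        show ee θ₁ ^ 4 + ee θ₂ ^ 4 + 1 = (ee θ₁ ^ 4 + 1) + ee θ₂ ^ 4 by ring]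
      ring
    · intro c hc hcn
      have h : ¬ ((4 * (c:ℤ)) = ((4*n : ℕ) : ℤ)) := by omega
      rw [if_neg h, mul_zero]
    · intro hnn
      exact absurd (Finset.mem_range.mpr (by omega)) hnn
  have h2 : ∀ θ₁ : ℝ, (∫ θ₂ in (0:ℝ)..(2*π), ∫ θ₃ in (0:ℝ)..(2*π), Sf θ₁ θ₂ θ₃ ^ (4*n))
      = ((2*π : ℂ)^2 * ((Nat.choose (4*n) n : ℂ) * (Nat.choose (3*n) n : ℂ)))
        * ((1 + ee θ₁ ^ 4) ^ (2*n) * ee θ₁ ^ (-(4*(n:ℤ)))) := by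
    intro θ₁
    rw [intervalIntegral.integral_congr (fun θ₂ _ => h3 θ₁ θ₂),
      intervalIntegral.integral_const_mul, key (3*n) n (by omega)]
    rw [show 3*n - n = 2*n by omega]
    rw [show (ee θ₁ ^ 4 + 1) = (1 + ee θ₁ ^ 4) by ring]
    ring
  rw [intervalIntegral.integral_congr (fun θ₁ _ => h2 θ₁),
    intervalIntegral.integral_const_mul, key (2*n) n (by omega)]
  rw [show 2*n - n = n by omega]
  push_cast
  ring
/-- Iterated triple integral over the cube `[0,2π]³`. -/
noncomputable def J (f : ℝ → ℝ → ℝ → ℂ) : ℂ :=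
  ∫ θ₁ in (0:ℝ)..(2*π), ∫ θ₂ in (0:ℝ)..(2*π), ∫ θ₃ in (0:ℝ)..(2*π), f θ₁ θ₂ θ₃

lemma cont_sect3 {f : ℝ → ℝ → ℝ → ℂ} (hf : Continuous fun p : ℝ × ℝ × ℝ => f p.1 p.2.1 p.2.2)
    (θ₁ θ₂ : ℝ) : Continuous fun θ₃ => f θ₁ θ₂ θ₃ :=
  hf.comp (by fun_prop : Continuous fun θ₃ : ℝ => ((θ₁, θ₂, θ₃) : ℝ × ℝ × ℝ))

lemma cont_int3 {f : ℝ → ℝ → ℝ → ℂ} (hf : Continuous fun p : ℝ × ℝ × ℝ => f p.1 p.2.1 p.2.2) :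
    Continuous fun p : ℝ × ℝ => ∫ θ₃ in (0:ℝ)..(2*π), f p.1 p.2 θ₃ := by
  apply intervalIntegral.continuous_parametric_intervalIntegral_of_continuous'
    (f := fun (p : ℝ × ℝ) θ₃ => f p.1 p.2 θ₃)
  exact hf.comp (by fun_prop : Continuous fun q : (ℝ × ℝ) × ℝ => ((q.1.1, q.1.2, q.2) : ℝ × ℝ × ℝ))

lemma cont_int23 {f : ℝ → ℝ → ℝ → ℂ} (hf : Continuous fun p : ℝ × ℝ × ℝ => f p.1 p.2.1 p.2.2) :
    Continuous fun θ₁ : ℝ => ∫ θ₂ in (0:ℝ)..(2*π), ∫ θ₃ in (0:ℝ)..(2*π), f θ₁ θ₂ θ₃ := by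
  apply intervalIntegral.continuous_parametric_intervalIntegral_of_continuous'
    (f := fun (θ₁ : ℝ) θ₂ => ∫ θ₃ in (0:ℝ)..(2*π), f θ₁ θ₂ θ₃)
  exact (cont_int3 hf).comp (by fun_prop :
    Continuous fun q : ℝ × ℝ => ((q.1, q.2) : ℝ × ℝ))

lemma Jadd {f g : ℝ → ℝ → ℝ → ℂ} (hf : Continuous fun p : ℝ × ℝ × ℝ => f p.1 p.2.1 p.2.2)
    (hg : Continuous fun p : ℝ × ℝ × ℝ => g p.1 p.2.1 p.2.2) :
    J (fun θ₁ θ₂ θ₃ => f θ₁ θ₂ θ₃ + g θ₁ θ₂ θ₃) = J f + J g := by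
  have h3 : ∀ θ₁ θ₂ : ℝ, (∫ θ₃ in (0:ℝ)..(2*π), (f θ₁ θ₂ θ₃ + g θ₁ θ₂ θ₃))
      = (∫ θ₃ in (0:ℝ)..(2*π), f θ₁ θ₂ θ₃) + ∫ θ₃ in (0:ℝ)..(2*π), g θ₁ θ₂ θ₃ := fun θ₁ θ₂ =>
    intervalIntegral.integral_add ((cont_sect3 hf θ₁ θ₂).intervalIntegrable _ _)
      ((cont_sect3 hg θ₁ θ₂).intervalIntegrable _ _)
  have h2 : ∀ θ₁ : ℝ, (∫ θ₂ in (0:ℝ)..(2*π), ∫ θ₃ in (0:ℝ)..(2*π), (f θ₁ θ₂ θ₃ + g θ₁ θ₂ θ₃))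
      = (∫ θ₂ in (0:ℝ)..(2*π), ∫ θ₃ in (0:ℝ)..(2*π), f θ₁ θ₂ θ₃)
        + ∫ θ₂ in (0:ℝ)..(2*π), ∫ θ₃ in (0:ℝ)..(2*π), g θ₁ θ₂ θ₃ := by
    intro θ₁
    rw [intervalIntegral.integral_congr (fun θ₂ _ => h3 θ₁ θ₂)]
    exact intervalIntegral.integral_add
      (((cont_int3 hf).comp (by fun_prop : Continuous fun θ₂ : ℝ => ((θ₁, θ₂) : ℝ × ℝ))).intervalIntegrable _ _)
      (((cont_int3 hg).comp (by fun_prop : Continuous fun θ₂ : ℝ => ((θ₁, θ₂) : ℝ × ℝ))).intervalIntegrable _ _)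
  rw [J, intervalIntegral.integral_congr (fun θ₁ _ => h2 θ₁)]
  exact intervalIntegral.integral_add
    ((cont_int23 hf).intervalIntegrable _ _) ((cont_int23 hg).intervalIntegrable _ _)

lemma Jmul (c : ℂ) (f : ℝ → ℝ → ℝ → ℂ) :
    J (fun θ₁ θ₂ θ₃ => c * f θ₁ θ₂ θ₃) = c * J f := by
  simp only [J, intervalIntegral.integral_const_mul]

lemma Jzero : J (fun _ _ _ => (0:ℂ)) = 0 := by simp [J]

lemma Jsum (s : Finset ℕ) (F : ℕ → ℝ → ℝ → ℝ → ℂ)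
    (hF : ∀ m, Continuous fun p : ℝ × ℝ × ℝ => F m p.1 p.2.1 p.2.2) :
    J (fun θ₁ θ₂ θ₃ => ∑ m ∈ s, F m θ₁ θ₂ θ₃) = ∑ m ∈ s, J (F m) := by
  classical
  induction s using Finset.induction_on with
  | empty => simpa using Jzero
  | insert a s' hnotmem ih =>
    simp only [Finset.sum_insert hnotmem]
    have h2 := Jadd (f := F a) (g := fun θ₁ θ₂ θ₃ => ∑ m ∈ s', F m θ₁ θ₂ θ₃) (hF a)
      (by exact continuous_finset_sum s' fun m _ => hF m)
    beta_reduce at h2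
    rw [h2, ih]

lemma Jnorm (f : ℝ → ℝ → ℝ → ℂ) (C : ℝ) (hC : 0 ≤ C)
    (hf : ∀ θ₁ θ₂ θ₃, ‖f θ₁ θ₂ θ₃‖ ≤ C) : ‖J f‖ ≤ (2*π)^3 * C := by
  have h2π : |2*π - 0| = 2*π := by
    rw [sub_zero, abs_of_pos]; positivity
  have h3 : ∀ θ₁ θ₂ : ℝ, ‖∫ θ₃ in (0:ℝ)..(2*π), f θ₁ θ₂ θ₃‖ ≤ C * (2*π) := by
    intro θ₁ θ₂
    calc ‖∫ θ₃ in (0:ℝ)..(2*π), f θ₁ θ₂ θ₃‖ ≤ C * |2*π - 0| :=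
        intervalIntegral.norm_integral_le_of_norm_le_const (fun θ₃ _ => hf θ₁ θ₂ θ₃)
      _ = C * (2*π) := by rw [h2π]
  have h2 : ∀ θ₁ : ℝ, ‖∫ θ₂ in (0:ℝ)..(2*π), ∫ θ₃ in (0:ℝ)..(2*π), f θ₁ θ₂ θ₃‖
      ≤ C * (2*π) * (2*π) := by
    intro θ₁
    calc ‖∫ θ₂ in (0:ℝ)..(2*π), ∫ θ₃ in (0:ℝ)..(2*π), f θ₁ θ₂ θ₃‖ ≤ C * (2*π) * |2*π - 0| :=
        intervalIntegral.norm_integral_le_of_norm_le_const (fun θ₂ _ => h3 θ₁ θ₂)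
      _ = C * (2*π) * (2*π) := by rw [h2π]
  calc ‖J f‖ ≤ C * (2*π) * (2*π) * |2*π - 0| :=
      intervalIntegral.norm_integral_le_of_norm_le_const (fun θ₁ _ => h2 θ₁)
    _ = (2*π)^3 * C := by rw [h2π]; ring
lemma choose_le_two_pow (N k : ℕ) : Nat.choose N k ≤ 2 ^ N := by
  rcases le_or_gt k N with h | h
  · calc Nat.choose N k ≤ ∑ i ∈ Finset.range (N+1), Nat.choose N i :=
        Finset.single_le_sum (fun i _ => Nat.zero_le _) (Finset.mem_range.mpr (by omega))
      _ = 2 ^ N := Nat.sum_range_choose N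
  · rw [Nat.choose_eq_zero_of_lt h]; exact Nat.zero_le _

lemma K_le (n : ℕ) :
    Nat.choose (4*n) n * Nat.choose (3*n) n * Nat.choose (2*n) n ≤ 8 ^ (4*n) := by
  calc Nat.choose (4*n) n * Nat.choose (3*n) n * Nat.choose (2*n) n
      ≤ 2^(4*n) * 2^(3*n) * 2^(2*n) := by
        gcongr <;> exact choose_le_two_pow _ _
    _ = 2^(9*n) := by rw [← pow_add, ← pow_add]; ring_nf
    _ ≤ 2^(12*n) := Nat.pow_le_pow_right (by norm_num) (by omega)
    _ = 8^(4*n) := by rw [show (8:ℕ) = 2^3 by norm_num, ← pow_mul]; ring_nf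

lemma K_eq (n : ℕ) :
    ((Nat.choose (4*n) n * Nat.choose (3*n) n * Nat.choose (2*n) n : ℕ) : ℂ)
      = (Nat.factorial (4*n) : ℂ) / (Nat.factorial n : ℂ)^4 := by
  have h2 : Nat.choose (2*n) n * Nat.factorial n * Nat.factorial n = Nat.factorial (2*n) := by
    have := Nat.choose_mul_factorial_mul_factorial (show n ≤ 2*n by omega)
    rwa [show 2*n - n = n by omega] at this
  have h3 : Nat.choose (3*n) n * Nat.factorial n * Nat.factorial (2*n) = Nat.factorial (3*n) := by
    have := Nat.choose_mul_factorial_mul_factorial (show n ≤ 3*n by omega)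
    rwa [show 3*n - n = 2*n by omega] at this
  have h4 : Nat.choose (4*n) n * Nat.factorial n * Nat.factorial (3*n) = Nat.factorial (4*n) := by
    have := Nat.choose_mul_factorial_mul_factorial (show n ≤ 4*n by omega)
    rwa [show 4*n - n = 3*n by omega] at this
  have hf : ((Nat.factorial n : ℂ)) ≠ 0 := by
    exact_mod_cast (Nat.cast_ne_zero (R := ℂ)).mpr n.factorial_ne_zero
  have h2' : ((Nat.choose (2*n) n : ℂ)) * (Nat.factorial n : ℂ) * (Nat.factorial n : ℂ)
      = (Nat.factorial (2*n) : ℂ) := by exact_mod_cast congrArg (Nat.cast (R := ℂ)) h2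
  have h3' : ((Nat.choose (3*n) n : ℂ)) * (Nat.factorial n : ℂ) * (Nat.factorial (2*n) : ℂ)
      = (Nat.factorial (3*n) : ℂ) := by exact_mod_cast congrArg (Nat.cast (R := ℂ)) h3
  have h4' : ((Nat.choose (4*n) n : ℂ)) * (Nat.factorial n : ℂ) * (Nat.factorial (3*n) : ℂ)
      = (Nat.factorial (4*n) : ℂ) := by exact_mod_cast congrArg (Nat.cast (R := ℂ)) h4
  rw [eq_div_iff (pow_ne_zero _ hf)]
  push_cast
  linear_combination ((Nat.choose (4*n) n : ℂ) * (Nat.factorial n : ℂ)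
      * (Nat.choose (3*n) n : ℂ) * (Nat.factorial n : ℂ)) * h2'
    + ((Nat.choose (4*n) n : ℂ) * (Nat.factorial n : ℂ)) * h3' + h4'

lemma part2 (n : ℕ) : ((Nat.factorial (4 * n) : ℚ)) / ((Nat.factorial n : ℚ)) ^ 4
      = 256 ^ n * (ascPochhammer ℚ n).eval (1 / 4) * (ascPochhammer ℚ n).eval (1 / 2)
          * (ascPochhammer ℚ n).eval (3 / 4) / ((Nat.factorial n : ℚ)) ^ 3 := by
  induction n with
  | zero => simp
  | succ n ih =>
    have e1 : (4 * (n+1)).factorial = (4*n+4)*((4*n+3)*((4*n+2)*((4*n+1)*(4*n).factorial))) := by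
      rw [show 4*(n+1) = (4*n+3)+1 by ring, Nat.factorial_succ,
        show 4*n+3 = (4*n+2)+1 by ring, Nat.factorial_succ,
        show 4*n+2 = (4*n+1)+1 by ring, Nat.factorial_succ,
        show 4*n+1 = (4*n)+1 by ring, Nat.factorial_succ]
    have hf : ((n.factorial : ℚ)) ≠ 0 := by exact_mod_cast n.factorial_ne_zero
    have hn1 : ((n:ℚ) + 1) ≠ 0 := by positivity
    rw [ascPochhammer_succ_eval, ascPochhammer_succ_eval, ascPochhammer_succ_eval, e1,
      Nat.factorial_succ]
    push_cast
    rw [div_eq_div_iff (by positivity) (by positivity)] at ih ⊢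
    linear_combination ((4*(n:ℚ)+4)*(4*(n:ℚ)+3)*(4*(n:ℚ)+2)*(4*(n:ℚ)+1)*((n:ℚ)+1)^3) * ih

lemma poch_cast (n : ℕ) (r : ℚ) :
    (((ascPochhammer ℚ n).eval r : ℚ) : ℂ) = (ascPochhammer ℂ n).eval ((r : ℂ)) := by
  rw [← ascPochhammer_map (algebraMap ℚ ℂ) n, Polynomial.eval_map,
    ← eq_ratCast (algebraMap ℚ ℂ) r, Polynomial.eval₂_at_apply]
  exact (eq_ratCast (algebraMap ℚ ℂ) _).symm

lemma part2C (n : ℕ) : ((Nat.factorial (4 * n) : ℂ)) / ((Nat.factorial n : ℂ)) ^ 4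
      = 256 ^ n * (ascPochhammer ℂ n).eval (1 / 4) * (ascPochhammer ℂ n).eval (1 / 2)
          * (ascPochhammer ℂ n).eval (3 / 4) / ((Nat.factorial n : ℂ)) ^ 3 := by
  have := congrArg (fun q : ℚ => (q : ℂ)) (part2 n)
  push_cast at this
  rw [poch_cast, poch_cast, poch_cast] at this
  push_cast at this
  convert this using 3 <;> norm_num

end QPaux

open QPaux Filter

/-- The constant term of `1/(1 − t·(x⁴+y⁴+z⁴+1)/(xyz))` (with `t = μ^{1/4}`), computed
as `(2πi)⁻³ ∫_{𝕋³} (1 − t(x⁴+y⁴+z⁴+1)/(xyz))⁻¹ dx/x dy/y dz/z` with `x = e^{iθ₁}` etc.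
(so `dx/x = i·dθ₁`), equals `₃F₂(1/4,1/2,3/4;1,1;256μ)` with `μ = t⁴`, for `|t|`
sufficiently small; the underlying coefficient identity is
`(4n)!/(n!)⁴ = 256ⁿ·(1/4)ₙ(1/2)ₙ(3/4)ₙ/(n!)³`. -/
theorem quartic_period_integral :
    (∃ ε > (0 : ℝ), ∀ t : ℂ, ‖t‖ < ε →
      (1 / (2 * (π : ℂ) * Complex.I) ^ 3) *
        ∫ θ₁ in (0 : ℝ)..(2 * π), ∫ θ₂ in (0 : ℝ)..(2 * π), ∫ θ₃ in (0 : ℝ)..(2 * π),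
          Complex.I ^ 3 *
            (1 - t * ((Complex.exp (Complex.I * θ₁) ^ 4 + Complex.exp (Complex.I * θ₂) ^ 4
                + Complex.exp (Complex.I * θ₃) ^ 4 + 1)
              / (Complex.exp (Complex.I * θ₁) * Complex.exp (Complex.I * θ₂)
                  * Complex.exp (Complex.I * θ₃))))⁻¹
      = F32quartic (256 * t ^ 4)) ∧
    (∀ n : ℕ, ((Nat.factorial (4 * n) : ℚ)) / ((Nat.factorial n : ℚ)) ^ 4
      = 256 ^ n * (ascPochhammer ℚ n).eval (1 / 4) * (ascPochhammer ℚ n).eval (1 / 2)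
          * (ascPochhammer ℚ n).eval (3 / 4) / ((Nat.factorial n : ℚ)) ^ 3) := by
  refine ⟨⟨1/8, by norm_num, fun t ht => ?_⟩, fun n => QPaux.part2 n⟩
  have ht' : ‖t‖ < 1/8 := ht
  have hSfeq : ∀ θ₁ θ₂ θ₃ : ℝ,
      (Complex.exp (Complex.I * θ₁) ^ 4 + Complex.exp (Complex.I * θ₂) ^ 4
        + Complex.exp (Complex.I * θ₃) ^ 4 + 1)
      / (Complex.exp (Complex.I * θ₁) * Complex.exp (Complex.I * θ₂)
          * Complex.exp (Complex.I * θ₃)) = Sf θ₁ θ₂ θ₃ := fun _ _ _ => rfl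
  simp only [hSfeq, intervalIntegral.integral_const_mul]
  have hid : (∫ θ₁ in (0:ℝ)..(2*π), ∫ θ₂ in (0:ℝ)..(2*π), ∫ θ₃ in (0:ℝ)..(2*π),
      (1 - t * Sf θ₁ θ₂ θ₃)⁻¹) = J (fun θ₁ θ₂ θ₃ => (1 - t * Sf θ₁ θ₂ θ₃)⁻¹) := rfl
  rw [hid]
  -- basic bounds
  have hw : ∀ θ₁ θ₂ θ₃ : ℝ, ‖t * Sf θ₁ θ₂ θ₃‖ ≤ 1/2 := by
    intro θ₁ θ₂ θ₃
    rw [norm_mul]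
    calc ‖t‖ * ‖Sf θ₁ θ₂ θ₃‖ ≤ (1/8) * 4 :=
        mul_le_mul (le_of_lt ht') (norm_Sf_le θ₁ θ₂ θ₃) (norm_nonneg _) (by norm_num)
      _ = 1/2 := by norm_num
  have hne : ∀ θ₁ θ₂ θ₃ : ℝ, (1 : ℂ) - t * Sf θ₁ θ₂ θ₃ ≠ 0 := by
    intro θ₁ θ₂ θ₃ h
    rw [sub_eq_zero] at h
    have h2 := hw θ₁ θ₂ θ₃
    rw [← h, norm_one] at h2
    norm_num at h2
  have hq2 : ∀ θ₁ θ₂ θ₃ : ℝ, ‖(1 - t * Sf θ₁ θ₂ θ₃)⁻¹‖ ≤ 2 := by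
    intro θ₁ θ₂ θ₃
    rw [norm_inv]
    have h1 : (1:ℝ)/2 ≤ ‖1 - t * Sf θ₁ θ₂ θ₃‖ := by
      have h3 := norm_sub_norm_le (1:ℂ) (t * Sf θ₁ θ₂ θ₃)
      have h2 := hw θ₁ θ₂ θ₃
      rw [norm_one] at h3
      linarith
    rw [show (2:ℝ) = ((1:ℝ)/2)⁻¹ by norm_num]
    exact inv_anti₀ (by norm_num) h1
  -- continuity
  have cq : Continuous fun p : ℝ×ℝ×ℝ => (1 - t * Sf p.1 p.2.1 p.2.2)⁻¹ :=
    (continuous_const.sub (continuous_const.mul cont_Sf)).inv₀ (fun p => hne _ _ _)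
  have cpow : ∀ m : ℕ, Continuous fun p : ℝ×ℝ×ℝ => (t * Sf p.1 p.2.1 p.2.2) ^ m := fun m =>
    (continuous_const.mul cont_Sf).pow m
  -- geometric expansion with remainder
  have hgeo : ∀ (M : ℕ) (θ₁ θ₂ θ₃ : ℝ), (1 - t * Sf θ₁ θ₂ θ₃)⁻¹
      = (∑ m ∈ Finset.range M, (t * Sf θ₁ θ₂ θ₃) ^ m)
        + (t * Sf θ₁ θ₂ θ₃)^M * (1 - t * Sf θ₁ θ₂ θ₃)⁻¹ := by
    intro M θ₁ θ₂ θ₃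
    have hw1 : t * Sf θ₁ θ₂ θ₃ ≠ 1 := by
      intro h
      have h2 := hw θ₁ θ₂ θ₃
      rw [h, norm_one] at h2
      norm_num at h2
    have h1 : (1 : ℂ) - t * Sf θ₁ θ₂ θ₃ ≠ 0 := hne _ _ _
    have h1' : t * Sf θ₁ θ₂ θ₃ - 1 ≠ 0 := sub_ne_zero.mpr hw1
    rw [geom_sum_eq hw1]
    field_simp
    ring
  -- split of the triple integral
  have hsplit : ∀ M : ℕ, J (fun θ₁ θ₂ θ₃ => (1 - t * Sf θ₁ θ₂ θ₃)⁻¹)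
      = (∑ m ∈ Finset.range M, t ^ m * J (fun θ₁ θ₂ θ₃ => Sf θ₁ θ₂ θ₃ ^ m))
        + J (fun θ₁ θ₂ θ₃ => (t * Sf θ₁ θ₂ θ₃)^M * (1 - t * Sf θ₁ θ₂ θ₃)⁻¹) := by
    intro M
    have h1 : J (fun θ₁ θ₂ θ₃ => (1 - t * Sf θ₁ θ₂ θ₃)⁻¹)
        = J (fun θ₁ θ₂ θ₃ => (∑ m ∈ Finset.range M, (t * Sf θ₁ θ₂ θ₃) ^ m)
            + (t * Sf θ₁ θ₂ θ₃)^M * (1 - t * Sf θ₁ θ₂ θ₃)⁻¹) := by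
      congr 1
      funext θ₁ θ₂ θ₃
      exact hgeo M θ₁ θ₂ θ₃
    have hJ := Jadd (f := fun θ₁ θ₂ θ₃ => ∑ m ∈ Finset.range M, (t * Sf θ₁ θ₂ θ₃) ^ m)
      (g := fun θ₁ θ₂ θ₃ => (t * Sf θ₁ θ₂ θ₃)^M * (1 - t * Sf θ₁ θ₂ θ₃)⁻¹)
      (by exact continuous_finset_sum _ fun m _ => cpow m) ((cpow M).mul cq)
    beta_reduce at hJ
    rw [h1, hJ]
    congr 1
    rw [Jsum (Finset.range M) (fun m θ₁ θ₂ θ₃ => (t * Sf θ₁ θ₂ θ₃) ^ m) (fun m => cpow m)]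
    refine Finset.sum_congr rfl fun m _ => ?_
    have h2 : (fun θ₁ θ₂ θ₃ => (t * Sf θ₁ θ₂ θ₃) ^ m)
        = fun θ₁ θ₂ θ₃ => t^m * (Sf θ₁ θ₂ θ₃ ^ m) := by
      funext θ₁ θ₂ θ₃
      rw [mul_pow]
    rw [h2, Jmul]
  -- remainder bound
  have hRle : ∀ M : ℕ, ‖J (fun θ₁ θ₂ θ₃ => (t * Sf θ₁ θ₂ θ₃)^M * (1 - t * Sf θ₁ θ₂ θ₃)⁻¹)‖
      ≤ (2*π)^3 * (2 * (1/2)^M) := by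
    intro M
    apply Jnorm _ _ (by positivity)
    intro θ₁ θ₂ θ₃
    rw [norm_mul, norm_pow]
    calc ‖t * Sf θ₁ θ₂ θ₃‖^M * ‖(1 - t * Sf θ₁ θ₂ θ₃)⁻¹‖ ≤ (1/2)^M * 2 :=
        mul_le_mul (pow_le_pow_left₀ (norm_nonneg _) (hw θ₁ θ₂ θ₃) M) (hq2 θ₁ θ₂ θ₃)
          (norm_nonneg _) (by positivity)
      _ = 2 * (1/2)^M := by ring
  have hR0 : Tendsto (fun M : ℕ => J (fun θ₁ θ₂ θ₃ =>
      (t * Sf θ₁ θ₂ θ₃)^M * (1 - t * Sf θ₁ θ₂ θ₃)⁻¹)) atTop (nhds 0) := by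
    apply squeeze_zero_norm hRle
    have h := (tendsto_pow_atTop_nhds_zero_of_lt_one (by norm_num : (0:ℝ) ≤ 1/2)
      (by norm_num : (1/2:ℝ) < 1)).const_mul ((2*π)^3 * 2)
    simpa [mul_assoc] using h
  have htend : Tendsto (fun M => ∑ m ∈ Finset.range M, t ^ m * J (fun θ₁ θ₂ θ₃ => Sf θ₁ θ₂ θ₃ ^ m))
      atTop (nhds (J (fun θ₁ θ₂ θ₃ => (1 - t * Sf θ₁ θ₂ θ₃)⁻¹))) := by
    have heq : (fun M => ∑ m ∈ Finset.range M, t ^ m * J (fun θ₁ θ₂ θ₃ => Sf θ₁ θ₂ θ₃ ^ m))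
        = fun M => J (fun θ₁ θ₂ θ₃ => (1 - t * Sf θ₁ θ₂ θ₃)⁻¹)
            - J (fun θ₁ θ₂ θ₃ => (t * Sf θ₁ θ₂ θ₃)^M * (1 - t * Sf θ₁ θ₂ θ₃)⁻¹) := by
      funext M
      rw [hsplit M]
      ring
    rw [heq]
    simpa using Tendsto.const_sub (J (fun θ₁ θ₂ θ₃ => (1 - t * Sf θ₁ θ₂ θ₃)⁻¹)) hR0
  -- values of the coefficients
  have hTmval : ∀ n : ℕ, J (fun θ₁ θ₂ θ₃ => Sf θ₁ θ₂ θ₃ ^ (4*n))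
      = (2*(π:ℂ))^3 * ((Nat.choose (4*n) n * Nat.choose (3*n) n * Nat.choose (2*n) n : ℕ) : ℂ) := by
    intro n
    exact T_eval n
  have hTm0 : ∀ m : ℕ, ¬ (4 ∣ m) → J (fun θ₁ θ₂ θ₃ => Sf θ₁ θ₂ θ₃ ^ m) = 0 := fun m hm =>
    T_not_dvd m hm
  -- summability
  have h8t : 8 * ‖t‖ < 1 := by linarith
  have hsummable : Summable (fun m => t ^ m * J (fun θ₁ θ₂ θ₃ => Sf θ₁ θ₂ θ₃ ^ m)) := by
    apply Summable.of_norm_bounded (g := fun m => (2*π)^3 * (8 * ‖t‖) ^ m)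
      ((summable_geometric_of_lt_one (by positivity) h8t).mul_left _)
    intro m
    by_cases hm : 4 ∣ m
    · obtain ⟨n, rfl⟩ := hm
      rw [hTmval n, norm_mul, norm_mul, norm_pow, norm_pow]
      have hn1 : ‖2*(π:ℂ)‖ = 2*π := by
        rw [show (2*(π:ℂ)) = ((2*π : ℝ) : ℂ) by push_cast; ring, Complex.norm_real,
          Real.norm_eq_abs, abs_of_pos (by positivity)]
      have hn2 : ‖((Nat.choose (4*n) n * Nat.choose (3*n) n * Nat.choose (2*n) n : ℕ) : ℂ)‖
          = ((Nat.choose (4*n) n * Nat.choose (3*n) n * Nat.choose (2*n) n : ℕ) : ℝ) :=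
        Complex.norm_natCast _
      rw [hn1, hn2]
      have hK : ((Nat.choose (4*n) n * Nat.choose (3*n) n * Nat.choose (2*n) n : ℕ) : ℝ)
          ≤ (8:ℝ)^(4*n) := by exact_mod_cast K_le n
      calc ‖t‖^(4*n) * ((2*π)^3 * ((Nat.choose (4*n) n * Nat.choose (3*n) n
              * Nat.choose (2*n) n : ℕ) : ℝ))
          = (2*π)^3 * (‖t‖^(4*n) * ((Nat.choose (4*n) n * Nat.choose (3*n) n
              * Nat.choose (2*n) n : ℕ) : ℝ)) := by ring
        _ ≤ (2*π)^3 * (‖t‖^(4*n) * (8:ℝ)^(4*n)) := by gcongr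
        _ = (2*π)^3 * (8 * ‖t‖)^(4*n) := by rw [mul_pow]; ring
    · rw [hTm0 m hm, mul_zero, norm_zero]
      positivity
  have hHasSum : HasSum (fun m => t ^ m * J (fun θ₁ θ₂ θ₃ => Sf θ₁ θ₂ θ₃ ^ m))
      (J (fun θ₁ θ₂ θ₃ => (1 - t * Sf θ₁ θ₂ θ₃)⁻¹)) := by
    have h1 := hsummable.hasSum
    rwa [tendsto_nhds_unique h1.tendsto_sum_nat htend] at h1
  have hinj : Function.Injective (fun n : ℕ => 4*n) := by
    intro a b h
    have h2 : 4*a = 4*b := h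
    omega
  have hvan : ∀ m, m ∉ Set.range (fun n : ℕ => 4*n)
      → t ^ m * J (fun θ₁ θ₂ θ₃ => Sf θ₁ θ₂ θ₃ ^ m) = 0 := by
    intro m hm
    have h4 : ¬ (4 ∣ m) := by
      rintro ⟨c, hc⟩
      exact hm ⟨c, show 4*c = m by omega⟩
    rw [hTm0 m h4, mul_zero]
  have hcomp : HasSum (fun n => t ^ (4*n) * J (fun θ₁ θ₂ θ₃ => Sf θ₁ θ₂ θ₃ ^ (4*n)))
      (J (fun θ₁ θ₂ θ₃ => (1 - t * Sf θ₁ θ₂ θ₃)⁻¹)) := by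
    have h := (Function.Injective.hasSum_iff hinj hvan).mpr hHasSum
    exact h
  have hdiv := hcomp.div_const ((2*(π:ℂ))^3)
  have hπ : ((π:ℂ)) ≠ 0 := Complex.ofReal_ne_zero.mpr Real.pi_ne_zero
  have hπ3 : (2*(π:ℂ))^3 ≠ 0 := pow_ne_zero _ (mul_ne_zero two_ne_zero hπ)
  have hterm : ∀ n : ℕ, t ^ (4*n) * J (fun θ₁ θ₂ θ₃ => Sf θ₁ θ₂ θ₃ ^ (4*n)) / (2*(π:ℂ))^3
      = ((ascPochhammer ℂ n).eval (1/4) * (ascPochhammer ℂ n).eval (1/2)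
          * (ascPochhammer ℂ n).eval (3/4)) / ((Nat.factorial n : ℂ))^3 * (256 * t^4)^n := by
    intro n
    rw [hTmval n, K_eq n, part2C n]
    have hfn : ((Nat.factorial n : ℂ)) ≠ 0 := Nat.cast_ne_zero.mpr n.factorial_ne_zero
    field_simp
    ring
  have hfinal : HasSum (fun n : ℕ => ((ascPochhammer ℂ n).eval (1/4)
      * (ascPochhammer ℂ n).eval (1/2) * (ascPochhammer ℂ n).eval (3/4))
        / ((Nat.factorial n : ℂ))^3 * (256 * t^4)^n)
      (J (fun θ₁ θ₂ θ₃ => (1 - t * Sf θ₁ θ₂ θ₃)⁻¹) / (2*(π:ℂ))^3) := by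
    simpa only [hterm] using hdiv
  have hF : F32quartic (256 * t^4)
      = J (fun θ₁ θ₂ θ₃ => (1 - t * Sf θ₁ θ₂ θ₃)⁻¹) / (2*(π:ℂ))^3 := hfinal.tsum_eq
  rw [hF]
  have hI := Complex.I_ne_zero
  field_simp
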